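/- Let M be a Feynman–Kac model with horizon n, let K = (t,R,K) be a knot compatible with M (t < n), and let M* = K ∗ M. Let M and M* have terminal predictive measures γ_n and γ*_n and asymptotic variance maps σ² and σ²_*. If φ ∈ F(M) (i.e. σ²(φ) < ∞), then γ_n(φ) = γ*_n(φ) and σ²_*(φ) ≤ σ²(φ). -/

import Mathlib

open MeasureTheory
open scoped ENNReal

noncomputable section

namespace KnotsPaper

variable {α β γ : Type*}

/-- Composition of measure-valued maps ("kernels"): `(L K)(x,·) = ∫ L(x,dy) K(y,·)`. -/
def kcomp [MeasurableSpace β] [MeasurableSpace γ]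
    (L : α → Measure β) (K : β → Measure γ) : α → Measure γ :=
  fun x => (L x).bind K

/-- A kernel applied to a nonnegative function: `K(H)(x) = ∫ H(y) K(x,dy)`. -/
def kap [MeasurableSpace β] (K : α → Measure β) (H : β → ℝ≥0∞) : α → ℝ≥0∞ :=
  fun x => ∫⁻ y, H y ∂(K x)

/-- Twisted kernel `K^H`: `K^H(x,dy) = K(x,dy)H(y)/K(H)(x)` when `K(H)(x) > 0`,
and `K(x,·)` when `K(H)(x) = 0`. -/
def twist [MeasurableSpace β] (K : α → Measure β) (H : β → ℝ≥0∞) : α → Measure β :=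
  fun x => if kap K H x = 0 then K x else (kap K H x)⁻¹ • (K x).withDensity H

/-- Markov kernel property for a measure-valued map. -/
def IsKernel [MeasurableSpace α] [MeasurableSpace β] (K : α → Measure β) : Prop :=
  Measurable K ∧ ∀ x, IsProbabilityMeasure (K x)

/-- Conditional variance `Var_K(f)(x) = K(f²)(x) − (K(f)(x))²` (real-valued). -/
def varK [MeasurableSpace β] (K : α → Measure β) (f : β → ℝ) : α → ℝ :=
  fun x => (∫ y, (f y) ^ 2 ∂(K x)) - (∫ y, f y ∂(K x)) ^ 2

/-- Conditional variance `Var_K(f)(x) = K(f²)(x) − (K(f)(x))²` in `ℝ≥0∞`. -/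
def varK' [MeasurableSpace β] (K : α → Measure β) (f : β → ℝ) : α → ℝ≥0∞ :=
  fun x => (∫⁻ y, ENNReal.ofReal ((f y) ^ 2) ∂(K x)) - ENNReal.ofReal ((∫ y, f y ∂(K x)) ^ 2)

/-- Conditional covariance `Cov_K(f,g)(x) = K(f·g)(x) − K(f)(x)·K(g)(x)`. -/
def covK [MeasurableSpace β] (K : α → Measure β) (f g : β → ℝ) : α → ℝ :=
  fun x => (∫ y, f y * g y ∂(K x)) - (∫ y, f y ∂(K x)) * (∫ y, g y ∂(K x))

/-- Tensor product of kernels: `(U ⊗ W)(x, d[y,z]) = U(x,dy) W(y,dz)`. -/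
def ktens [MeasurableSpace β] [MeasurableSpace γ]
    (U : α → Measure β) (W : β → Measure γ) : α → Measure (β × γ) :=
  fun x => (U x).bind (fun y => (W y).map (fun z => (y, z)))

variable {E : Type*} [MeasurableSpace E]

/-- A discrete-time (updated) Feynman--Kac model with horizon `n`:
an initial distribution `init`, Markov kernels `M p` (used for `p ∈ [1,n]`)
and potential functions `G p` (used for `p ∈ [0,n]`). -/
structure FK (E : Type*) [MeasurableSpace E] (n : ℕ) where
  init : Measure E
  M : ℕ → E → Measure E
  G : ℕ → E → ℝ≥0∞

namespace FK

variable {n : ℕ}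

/-- Regularity of a Feynman--Kac model: the initial distribution is a probability
measure, the `M p` are Markov kernels, and the potentials `G p` are measurable,
`[0,∞)`-valued and integrable with respect to `M p (x, ·)` for all `x` (resp. `init`). -/
def Reg (𝓜 : FK E n) : Prop :=
  IsProbabilityMeasure 𝓜.init ∧
  (∀ p, 1 ≤ p → p ≤ n → IsKernel (𝓜.M p)) ∧
  (∀ p, p ≤ n → Measurable (𝓜.G p)) ∧
  (∀ p x, 𝓜.G p x ≠ ∞) ∧
  (∫⁻ x, 𝓜.G 0 x ∂𝓜.init) ≠ ∞ ∧
  (∀ p x, 1 ≤ p → p ≤ n → kap (𝓜.M p) (𝓜.G p) x ≠ ∞)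

/-- Predictive measures `γ_p`. -/
def gamma (𝓜 : FK E n) : ℕ → Measure E
  | 0 => 𝓜.init
  | p + 1 => ((gamma 𝓜 p).withDensity (𝓜.G p)).bind (𝓜.M (p + 1))

/-- Updated measures `γ̂_p`. -/
def gammaHat (𝓜 : FK E n) (p : ℕ) : Measure E := (𝓜.gamma p).withDensity (𝓜.G p)

/-- Normalised predictive measures `η_p`. -/
def eta (𝓜 : FK E n) (p : ℕ) : Measure E := ((𝓜.gamma p) Set.univ)⁻¹ • 𝓜.gamma p

/-- Normalised updated measures `η̂_p`. -/
def etaHat (𝓜 : FK E n) (p : ℕ) : Measure E := ((𝓜.gammaHat p) Set.univ)⁻¹ • 𝓜.gammaHat p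

/-- The kernels `Q_{p,n}`: `Q_{n,n} = Id` and `Q_{p,n} = Q_{p+1} Q_{p+1,n}` where
`Q_{p+1}(x,dy) = G_p(x) M_{p+1}(x,dy)`. -/
def Qto (𝓜 : FK E n) (p : ℕ) : E → Measure E :=
  if _h : n ≤ p then fun x => Measure.dirac x
  else fun x => ((𝓜.G p x) • (𝓜.M (p + 1) x)).bind (Qto 𝓜 (p + 1))
termination_by n - p
decreasing_by omega

/-- `Q_{p,n}(φ)`. -/
def Qf (𝓜 : FK E n) (p : ℕ) (φ : E → ℝ) : E → ℝ := fun x => ∫ y, φ y ∂(𝓜.Qto p x)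

/-- The asymptotic variance terms
`v_{p,n}(φ) = γ_p(1) γ_p(Q_{p,n}(φ)²)/γ_n(1)² − η_n(φ)²` (valued in `[0,∞]`). -/
def v (𝓜 : FK E n) (p : ℕ) (φ : E → ℝ) : ℝ≥0∞ :=
  𝓜.gamma p Set.univ * (∫⁻ x, ENNReal.ofReal ((𝓜.Qf p φ x) ^ 2) ∂(𝓜.gamma p))
      / (𝓜.gamma n Set.univ) ^ 2
    - ENNReal.ofReal ((∫ x, φ x ∂(𝓜.eta n)) ^ 2)

/-- The (predictive) asymptotic variance map `σ²(φ) = Σ_{p=0}^n v_{p,n}(φ)`. -/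
def var (𝓜 : FK E n) (φ : E → ℝ) : ℝ≥0∞ := ∑ p ∈ Finset.range (n + 1), 𝓜.v p φ

/-- The updated asymptotic variance terms `v̂_{p,n}(φ) = v_{p,n}(G_n·φ)/η_n(G_n)²`. -/
def vhat (𝓜 : FK E n) (p : ℕ) (φ : E → ℝ) : ℝ≥0∞ :=
  𝓜.v p (fun x => (𝓜.G n x).toReal * φ x)
    / ENNReal.ofReal ((∫ x, (𝓜.G n x).toReal ∂(𝓜.eta n)) ^ 2)

/-- The updated asymptotic variance map `σ̂²(φ)`. -/
def varHat (𝓜 : FK E n) (φ : E → ℝ) : ℝ≥0∞ := ∑ p ∈ Finset.range (n + 1), 𝓜.vhat p φ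

/-- The class `F(M)` of relevant test functions for the predictive measure. -/
def memF (𝓜 : FK E n) (φ : E → ℝ) : Prop := Integrable φ (𝓜.eta n) ∧ 𝓜.var φ ≠ ∞

/-- The class `F̂(M)` of relevant test functions for the updated measure. -/
def memFhat (𝓜 : FK E n) (φ : E → ℝ) : Prop := Integrable φ (𝓜.etaHat n) ∧ 𝓜.varHat φ ≠ ∞

end FK

/-- Application of a single knot `(t,R,K)` with `1 ≤ t < n` to a model:
`M*_t = R`, `G*_t = K(G_t)`, `M*_{t+1} = K^{G_t} M_{t+1}`, everything else unchanged. -/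
def knotApply {n : ℕ} (t : ℕ) (R K : E → Measure E) (𝓜 : FK E n) : FK E n where
  init := 𝓜.init
  M := fun p =>
    if p = t then R
    else if p = t + 1 then kcomp (twist K (𝓜.G t)) (𝓜.M (t + 1))
    else 𝓜.M p
  G := fun p => if p = t then kap K (𝓜.G t) else 𝓜.G p

/-- Application of a knot `(0,R₀,K)` at time `0` (where `R₀` is a probability measure):
`M*_0 = R₀`, `G*_0 = K(G_0)`, `M*_1 = K^{G_0} M_1`, everything else unchanged. -/
def knotApply0 {n : ℕ} (R0 : Measure E) (K : E → Measure E) (𝓜 : FK E n) : FK E n where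
  init := R0
  M := fun p => if p = 1 then kcomp (twist K (𝓜.G 0)) (𝓜.M 1) else 𝓜.M p
  G := fun p => if p = 0 then kap K (𝓜.G 0) else 𝓜.G p

/-- A knotset `(R_{0:n-1}, K_{0:n-1})`: `n` knots `(p, R_p, K_p)`, `p ∈ [0,n-1]`,
where `R_0` is a probability measure (recorded in `R0`). -/
structure Knotset (E : Type*) [MeasurableSpace E] (n : ℕ) where
  R0 : Measure E
  R : ℕ → E → Measure E
  K : ℕ → E → Measure E

namespace Knotset

variable {n : ℕ}

/-- Regularity of a knotset: its constituents are (probability) Markov kernels. -/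
def Reg (𝓚 : Knotset E n) : Prop :=
  IsProbabilityMeasure 𝓚.R0 ∧
  (∀ p, 1 ≤ p → p < n → IsKernel (𝓚.R p)) ∧
  (∀ p, p < n → IsKernel (𝓚.K p))

/-- Compatibility of a knotset with a model: `R_p K_p = M_p` for every `p ∈ [0,n-1]`. -/
def Compat (𝓚 : Knotset E n) (𝓜 : FK E n) : Prop :=
  𝓚.R0.bind (𝓚.K 0) = 𝓜.init ∧
  ∀ p, 1 ≤ p → p < n → kcomp (𝓚.R p) (𝓚.K p) = 𝓜.M p

/-- The knot-model `K ∗ M` in closed form: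
`M*_0 = R_0`, `G*_0 = K_0(G_0)`, `M*_p = K_{p-1}^{G_{p-1}} R_p`, `G*_p = K_p(G_p)` for
`p ∈ [1,n-1]`, `M*_n = K_{n-1}^{G_{n-1}} M_n` and `G*_n = G_n`. -/
def apply (𝓚 : Knotset E n) (𝓜 : FK E n) : FK E n where
  init := 𝓚.R0
  M := fun p =>
    if p = 0 then 𝓜.M 0
    else if p < n then kcomp (twist (𝓚.K (p - 1)) (𝓜.G (p - 1))) (𝓚.R p)
    else if p = n then kcomp (twist (𝓚.K (n - 1)) (𝓜.G (n - 1))) (𝓜.M n)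
    else 𝓜.M p
  G := fun p => if p < n then kap (𝓚.K p) (𝓜.G p) else 𝓜.G p

/-- The sequential application `K_t ∗ K_{t+1} ∗ ⋯ ∗ K_{n-1} ∗ M` of the knots of a
knotset at times `t, t+1, ..., n-1` (in descending time order), for `1 ≤ t`. -/
def applyFrom (𝓚 : Knotset E n) (𝓜 : FK E n) (t : ℕ) : FK E n :=
  if _h : t < n then knotApply t (𝓚.R t) (𝓚.K t) (applyFrom 𝓚 𝓜 (t + 1))
  else 𝓜
termination_by n - t
decreasing_by omega

/-- The knotset operator defined as the sequential application
`K ∗ M = K_0 ∗ K_1 ∗ ⋯ ∗ K_{n-1} ∗ M` of its knots in descending time order. -/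
def seqApply (𝓚 : Knotset E n) (𝓜 : FK E n) : FK E n :=
  knotApply0 𝓚.R0 (𝓚.K 0) (𝓚.applyFrom 𝓜 1)

end Knotset

/-- One application of a compatible knotset. -/
def KnotStep {n : ℕ} (𝓜' 𝓜 : FK E n) : Prop :=
  ∃ 𝓚 : Knotset E n, 𝓚.Reg ∧ 𝓚.Compat 𝓜 ∧ 𝓜' = 𝓚.apply 𝓜

/-- The partial order on Feynman--Kac models induced by knotsets:
`M* ≼ M` iff `M* = K_m ∗ ⋯ ∗ K_1 ∗ M` for some finite sequence of compatible knotsets. -/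
def KnotOrder {n : ℕ} (𝓜' 𝓜 : FK E n) : Prop :=
  Relation.TransGen KnotStep 𝓜' 𝓜

/-- The adapted knotset for a model `M`: the knot at time `p ≥ 1` is `(p, Id, M_p)`
and the knot at time `0` is `(0, δ_{x₀}, K_0)` with `K_0(x₀,·) = M_0`. -/
def IsAdaptedKnotset {n : ℕ} (𝓚 : Knotset E n) (𝓜 : FK E n) : Prop :=
  (∃ x₀ : E, 𝓚.R0 = Measure.dirac x₀ ∧ 𝓚.K 0 x₀ = 𝓜.init) ∧
  (∀ p, 1 ≤ p → p < n →
    𝓚.R p = (fun x => Measure.dirac x) ∧ 𝓚.K p = 𝓜.M p)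

/-- A Feynman--Kac model with horizon `n ≥ 1` whose terminal state space is the
product `E × E` (as arises from a `φ`-extension): terminal Markov kernel `Mn` and
terminal potential `Gn` are defined on the product space. -/
structure FKx (E : Type*) [MeasurableSpace E] (n : ℕ) where
  init : Measure E
  M : ℕ → E → Measure E
  Mn : E → Measure (E × E)
  G : ℕ → E → ℝ≥0∞
  Gn : E × E → ℝ≥0∞

namespace FKx

variable {n : ℕ}

/-- Predictive measures `γ_p` for `p ≤ n-1`. -/
def gamma (𝓝 : FKx E n) : ℕ → Measure E
  | 0 => 𝓝.init
  | p + 1 => ((gamma 𝓝 p).withDensity (𝓝.G p)).bind (𝓝.M (p + 1))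

/-- Updated measures `γ̂_p` for `p ≤ n-1`. -/
def gammaHat (𝓝 : FKx E n) (p : ℕ) : Measure E := (𝓝.gamma p).withDensity (𝓝.G p)

/-- Normalised predictive measures `η_p` for `p ≤ n-1`. -/
def eta (𝓝 : FKx E n) (p : ℕ) : Measure E := ((𝓝.gamma p) Set.univ)⁻¹ • 𝓝.gamma p

/-- Normalised updated measures `η̂_p` for `p ≤ n-1`. -/
def etaHat (𝓝 : FKx E n) (p : ℕ) : Measure E := ((𝓝.gammaHat p) Set.univ)⁻¹ • 𝓝.gammaHat p

/-- Terminal predictive measure `γ_n` (on the product space). -/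
def gammaN (𝓝 : FKx E n) : Measure (E × E) := (𝓝.gammaHat (n - 1)).bind 𝓝.Mn

/-- Terminal updated measure `γ̂_n`. -/
def gammaHatN (𝓝 : FKx E n) : Measure (E × E) := 𝓝.gammaN.withDensity 𝓝.Gn

/-- Terminal normalised predictive measure `η_n`. -/
def etaN (𝓝 : FKx E n) : Measure (E × E) := (𝓝.gammaN Set.univ)⁻¹ • 𝓝.gammaN

/-- Terminal normalised updated measure `η̂_n`. -/
def etaHatN (𝓝 : FKx E n) : Measure (E × E) := (𝓝.gammaHatN Set.univ)⁻¹ • 𝓝.gammaHatN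

/-- Kernels `Q_{p,n}` (into the terminal product space), for `p ≤ n-1`. -/
def Qto (𝓝 : FKx E n) (p : ℕ) : E → Measure (E × E) :=
  if _h : n - 1 ≤ p then fun x => (𝓝.G (n - 1) x) • (𝓝.Mn x)
  else fun x => ((𝓝.G p x) • (𝓝.M (p + 1) x)).bind (Qto 𝓝 (p + 1))
termination_by n - 1 - p
decreasing_by omega

/-- `Q_{p,n}(φ)` for `p ≤ n-1`. -/
def Qf (𝓝 : FKx E n) (p : ℕ) (φ : E × E → ℝ) : E → ℝ := fun x => ∫ z, φ z ∂(𝓝.Qto p x)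

/-- Asymptotic variance terms `v_{p,n}(φ)` (with `Q_{n,n} = Id`). -/
def v (𝓝 : FKx E n) (p : ℕ) (φ : E × E → ℝ) : ℝ≥0∞ :=
  if p = n then
    𝓝.gammaN Set.univ * (∫⁻ z, ENNReal.ofReal ((φ z) ^ 2) ∂𝓝.gammaN)
        / (𝓝.gammaN Set.univ) ^ 2
      - ENNReal.ofReal ((∫ z, φ z ∂𝓝.etaN) ^ 2)
  else
    𝓝.gamma p Set.univ * (∫⁻ x, ENNReal.ofReal ((𝓝.Qf p φ x) ^ 2) ∂(𝓝.gamma p))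
        / (𝓝.gammaN Set.univ) ^ 2
      - ENNReal.ofReal ((∫ z, φ z ∂𝓝.etaN) ^ 2)

/-- Updated asymptotic variance terms `v̂_{p,n}(φ) = v_{p,n}(G_n·φ)/η_n(G_n)²`. -/
def vhat (𝓝 : FKx E n) (p : ℕ) (φ : E × E → ℝ) : ℝ≥0∞ :=
  𝓝.v p (fun z => (𝓝.Gn z).toReal * φ z)
    / ENNReal.ofReal ((∫ z, (𝓝.Gn z).toReal ∂𝓝.etaN) ^ 2)

/-- Updated asymptotic variance map `σ̂²(φ)`. -/
def varHat (𝓝 : FKx E n) (φ : E × E → ℝ) : ℝ≥0∞ := ∑ p ∈ Finset.range (n + 1), 𝓝.vhat p φ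

/-- The class `F̂` of relevant test functions for the updated terminal measure. -/
def memFhat (𝓝 : FKx E n) (φ : E × E → ℝ) : Prop :=
  Integrable φ 𝓝.etaHatN ∧ 𝓝.varHat φ ≠ ∞

end FKx

/-- The `φ`-extended model `M^φ` of a model `M`: the terminal kernel becomes
`M_n ⊗ Id` and the terminal potential becomes `(G_n·φ) ⊗ φ^{-1}`. -/
def FK.ext {n : ℕ} (𝓜 : FK E n) (φ : E → ℝ) : FKx E n where
  init := 𝓜.init
  M := 𝓜.M
  Mn := fun x => (𝓜.M n x).map (fun y => (y, y))
  G := 𝓜.G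
  Gn := fun z => 𝓜.G n z.1 * ENNReal.ofReal (φ z.1) * (ENNReal.ofReal (φ z.2))⁻¹

/-- Application of a standard knot `(t,R,K)`, `1 ≤ t < n`, to an extended model. -/
def knotApplyX {n : ℕ} (t : ℕ) (R K : E → Measure E) (𝓝 : FKx E n) : FKx E n where
  init := 𝓝.init
  M := fun p =>
    if p = t then R
    else if p = t + 1 then kcomp (twist K (𝓝.G t)) (𝓝.M (t + 1))
    else 𝓝.M p
  Mn := if t + 1 = n then kcomp (twist K (𝓝.G t)) 𝓝.Mn else 𝓝.Mn
  G := fun p => if p = t then kap K (𝓝.G t) else 𝓝.G p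
  Gn := 𝓝.Gn

/-- Application of a standard knot `(0,R₀,K)` at time `0` to an extended model. -/
def knotApplyX0 {n : ℕ} (R0 : Measure E) (K : E → Measure E) (𝓝 : FKx E n) : FKx E n where
  init := R0
  M := fun p => if p = 1 then kcomp (twist K (𝓝.G 0)) (𝓝.M 1) else 𝓝.M p
  Mn := if n = 1 then kcomp (twist K (𝓝.G 0)) 𝓝.Mn else 𝓝.Mn
  G := fun p => if p = 0 then kap K (𝓝.G 0) else 𝓝.G p
  Gn := 𝓝.Gn

/-- Application of a terminal knot `(n,R,K)` to an extended model, written with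
respect to the decomposition `M_n = P_1 ⊗ P_2`, `G_n = H ⊗ φ^{-1}` (with `P_1 = RK`):
`M*_n = R ⊗ K^H P_2` and `G*_n = K(H) ⊗ φ^{-1}`, all other components unchanged. -/
def termKnotApply {n : ℕ} (R K P2 : E → Measure E) (H : E → ℝ≥0∞) (φ : E → ℝ)
    (𝓝 : FKx E n) : FKx E n where
  init := 𝓝.init
  M := 𝓝.M
  Mn := ktens R (kcomp (twist K H) P2)
  G := 𝓝.G
  Gn := fun z => kap K H z.1 * (ENNReal.ofReal (φ z.2))⁻¹

/-- Terminal-knot model-compatibility of an extended model w.r.t. a reference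
terminal potential `Gref` and target function `φ`: `M_n = U ⊗ V^{G_n·φ}` and
`G_n = V(G_n·φ) ⊗ φ^{-1}` for some Markov kernels `U`, `V`. -/
def TermCompatible {n : ℕ} (𝓝 : FKx E n) (Gref : E → ℝ≥0∞) (φ : E → ℝ) : Prop :=
  ∃ U V : E → Measure E, IsKernel U ∧ IsKernel V ∧
    𝓝.Mn = ktens U (twist V (fun y => Gref y * ENNReal.ofReal (φ y))) ∧
    𝓝.Gn = fun z =>
      kap V (fun y => Gref y * ENNReal.ofReal (φ y)) z.1 * (ENNReal.ofReal (φ z.2))⁻¹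

/-- One application of a (standard or terminal) knot to an extended model, relative to
a reference terminal potential `Gref` and target function `φ`. -/
def XStep {n : ℕ} (Gref : E → ℝ≥0∞) (φ : E → ℝ) (𝓝' 𝓝 : FKx E n) : Prop :=
  (∃ (R0 : Measure E) (K : E → Measure E), IsProbabilityMeasure R0 ∧ IsKernel K ∧
      R0.bind K = 𝓝.init ∧ 𝓝' = knotApplyX0 R0 K 𝓝) ∨
  (∃ (t : ℕ) (R K : E → Measure E), 1 ≤ t ∧ t < n ∧ IsKernel R ∧ IsKernel K ∧
      kcomp R K = 𝓝.M t ∧ 𝓝' = knotApplyX t R K 𝓝) ∨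
  (∃ R K U V : E → Measure E, IsKernel R ∧ IsKernel K ∧ IsKernel U ∧ IsKernel V ∧
      𝓝.Mn = ktens U (twist V (fun y => Gref y * ENNReal.ofReal (φ y))) ∧
      𝓝.Gn = (fun z =>
        kap V (fun y => Gref y * ENNReal.ofReal (φ y)) z.1 * (ENNReal.ofReal (φ z.2))⁻¹) ∧
      kcomp R K = U ∧
      𝓝' = termKnotApply R K (twist V (fun y => Gref y * ENNReal.ofReal (φ y)))
              (kap V (fun y => Gref y * ENNReal.ofReal (φ y))) φ 𝓝)

/-- A finite (nonempty) sequence of (standard or terminal) knot applications. -/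
def XChain {n : ℕ} (Gref : E → ℝ≥0∞) (φ : E → ℝ) : FKx E n → FKx E n → Prop :=
  Relation.TransGen (XStep Gref φ)

/-- The partial order `M* ≼_φ M°` with respect to a reference model `M`:
`M*` is obtained from `M°` by knots, and `M°` is obtained from `M^φ` by knots. -/
def XOrder {n : ℕ} (𝓜 : FK E n) (φ : E → ℝ) (𝓝' 𝓝 : FKx E n) : Prop :=
  XChain (𝓜.G n) φ 𝓝' 𝓝 ∧ XChain (𝓜.G n) φ 𝓝 (𝓜.ext φ)

end KnotsPaper

namespace KnotsPaper
section Aux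

variable {α β : Type*} [MeasurableSpace α] [MeasurableSpace β]

lemma measurable_kap {K : α → Measure β} {H : β → ℝ≥0∞} (hK : Measurable K) (hH : Measurable H) :
    Measurable (kap K H) := (Measure.measurable_lintegral hH).comp hK

lemma measurable_smul_kernel {c : α → ℝ≥0∞} {K : α → Measure β} (hc : Measurable c)
    (hK : Measurable K) : Measurable (fun x => c x • K x) := by
  refine Measure.measurable_of_measurable_coe _ fun s hs => ?_
  simp only [Measure.smul_apply, smul_eq_mul]
  exact hc.mul ((Measure.measurable_coe hs).comp hK)

lemma measurable_withDensity_kernel {K : α → Measure β} {H : β → ℝ≥0∞} (hK : Measurable K)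
    (hH : Measurable H) : Measurable (fun x => (K x).withDensity H) := by
  refine Measure.measurable_of_measurable_coe _ fun s hs => ?_
  simp only [withDensity_apply _ hs, ← lintegral_indicator hs]
  exact (Measure.measurable_lintegral (hH.indicator hs)).comp hK

lemma measurable_twist {K : α → Measure β} {H : β → ℝ≥0∞} (hK : Measurable K)
    (hH : Measurable H) : Measurable (twist K H) := by
  unfold twist
  refine Measurable.ite ?_ hK
    (measurable_smul_kernel (measurable_kap hK hH).inv (measurable_withDensity_kernel hK hH))
  exact (measurable_kap hK hH) (measurableSet_singleton 0)

lemma bind_congr_ae {μ : Measure α} {f g : α → Measure β} (hf : Measurable f) (hg : Measurable g)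
    (h : f =ᵐ[μ] g) : μ.bind f = μ.bind g := by
  ext s hs
  rw [Measure.bind_apply hs hf.aemeasurable, Measure.bind_apply hs hg.aemeasurable]
  exact lintegral_congr_ae (h.mono fun x hx => by simp only [hx])

lemma smul_bind' (c : ℝ≥0∞) (μ : Measure α) {f : α → Measure β} (hf : Measurable f) :
    (c • μ).bind f = c • μ.bind f := by
  ext s hs
  simp [Measure.bind_apply hs hf.aemeasurable, lintegral_smul_measure]

lemma withDensity_bind {μ : Measure α} {H : α → ℝ≥0∞} {g : α → Measure β} (hH : Measurable H)
    (hg : Measurable g) : (μ.withDensity H).bind g = μ.bind (fun x => H x • g x) := by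
  ext s hs
  rw [Measure.bind_apply hs hg.aemeasurable, Measure.bind_apply hs (measurable_smul_kernel hH hg).aemeasurable,
    lintegral_withDensity_eq_lintegral_mul μ hH (g := fun a => (g a) s)
      ((Measure.measurable_coe hs).comp hg)]
  simp [Measure.smul_apply, smul_eq_mul]

lemma bind_withDensity {μ : Measure α} {K : α → Measure β} {H : β → ℝ≥0∞} (hK : Measurable K)
    (hH : Measurable H) :
    μ.bind (fun x => (K x).withDensity H) = (μ.bind K).withDensity H := by
  ext s hs
  rw [Measure.bind_apply hs (measurable_withDensity_kernel hK hH).aemeasurable, withDensity_apply _ hs,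
    ← lintegral_indicator hs, Measure.lintegral_bind hK.aemeasurable (hH.indicator hs).aemeasurable]
  simp_rw [withDensity_apply _ hs, ← lintegral_indicator hs]

lemma kap_smul_twist {K : α → Measure β} (H : β → ℝ≥0∞) (x : α)
    (hfin : kap K H x ≠ ⊤) : kap K H x • twist K H x = (K x).withDensity H := by
  unfold twist
  by_cases h0 : kap K H x = 0
  · rw [if_pos h0, h0]
    have : ((K x).withDensity H) Set.univ = 0 := by
      rw [withDensity_apply _ MeasurableSet.univ, setLIntegral_univ]; exact h0
    rw [Measure.measure_univ_eq_zero.mp this]; simp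
  · rw [if_neg h0, smul_smul, ENNReal.mul_inv_cancel h0 hfin, one_smul]

/-- Bochner integral over a bind of measures. -/
lemma integral_bind' {μ : Measure α} {κ : α → Measure β} (hκ : Measurable κ) {f : β → ℝ}
    (hf : Measurable f) (hint : Integrable f (μ.bind κ)) :
    ∫ y, f y ∂(μ.bind κ) = ∫ x, (∫ y, f y ∂(κ x)) ∂μ := by
  set P : α → ℝ≥0∞ := fun x => ∫⁻ y, ENNReal.ofReal (f y) ∂κ x with hP
  set N : α → ℝ≥0∞ := fun x => ∫⁻ y, ENNReal.ofReal (-f y) ∂κ x with hN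
  have hPm : Measurable P := (Measure.measurable_lintegral hf.ennreal_ofReal).comp hκ
  have hNm : Measurable N := (Measure.measurable_lintegral hf.neg.ennreal_ofReal).comp hκ
  have habs : ∫⁻ y, (‖f y‖₊ : ℝ≥0∞) ∂(μ.bind κ) ≠ ⊤ := hint.2.ne
  have hnorm : ∀ y, (‖f y‖₊ : ℝ≥0∞) = ENNReal.ofReal (f y) + ENNReal.ofReal (-f y) := by
    intro y
    rcases le_total 0 (f y) with h | h
    · have h2 : ENNReal.ofReal (-f y) = 0 := ENNReal.ofReal_eq_zero.mpr (neg_nonpos.mpr h)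
      rw [h2, add_zero, ← enorm_eq_nnnorm, ← ofReal_norm, Real.norm_of_nonneg h]
    · have h2 : ENNReal.ofReal (f y) = 0 := ENNReal.ofReal_eq_zero.mpr h
      rw [h2, zero_add, ← enorm_eq_nnnorm, ← ofReal_norm, Real.norm_of_nonpos h]
  simp_rw [hnorm] at habs
  rw [Measure.lintegral_bind (f := fun y => ENNReal.ofReal (f y) + ENNReal.ofReal (-f y))
    hκ.aemeasurable (hf.ennreal_ofReal.add hf.neg.ennreal_ofReal).aemeasurable] at habs
  simp_rw [lintegral_add_left hf.ennreal_ofReal] at habs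
  rw [lintegral_add_left hPm] at habs
  obtain ⟨hPfin, hNfin⟩ := ENNReal.add_ne_top.mp habs
  have hkey : ∀ᵐ x ∂μ, ∫ y, f y ∂κ x = (P x).toReal - (N x).toReal := by
    filter_upwards [ae_lt_top hPm hPfin, ae_lt_top hNm hNfin] with x h1 h2
    have hintx : Integrable f (κ x) := by
      refine ⟨hf.aestronglyMeasurable, ?_⟩
      show (∫⁻ y, (‖f y‖₊ : ℝ≥0∞) ∂κ x) < ⊤
      simp_rw [hnorm]
      rw [lintegral_add_left hf.ennreal_ofReal]
      exact ENNReal.add_lt_top.mpr ⟨h1, h2⟩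
    exact integral_eq_lintegral_pos_part_sub_lintegral_neg_part hintx
  rw [integral_eq_lintegral_pos_part_sub_lintegral_neg_part hint,
    Measure.lintegral_bind hκ.aemeasurable hf.ennreal_ofReal.aemeasurable,
    Measure.lintegral_bind (f := fun y => ENNReal.ofReal (-f y)) hκ.aemeasurable
      hf.neg.ennreal_ofReal.aemeasurable,
    integral_congr_ae hkey,
    integral_sub (integrable_toReal_of_lintegral_ne_top hPm.aemeasurable hPfin)
      (integrable_toReal_of_lintegral_ne_top hNm.aemeasurable hNfin),
    integral_toReal hPm.aemeasurable (ae_lt_top hPm hPfin),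
    integral_toReal hNm.aemeasurable (ae_lt_top hNm hNfin)]

/-- Measurability of `x ↦ ∫ f ∂(κ x)` for measurable `f`. -/
lemma measurable_integral_kernel {κ : α → Measure β} (hκ : Measurable κ) {f : β → ℝ}
    (hf : Measurable f) : Measurable (fun x => ∫ y, f y ∂κ x) := by
  have h1 : Measurable fun x => ∫⁻ y, (‖f y‖₊ : ℝ≥0∞) ∂κ x :=
    (Measure.measurable_lintegral hf.enorm).comp hκ
  have hP : Measurable fun x => ∫⁻ y, ENNReal.ofReal (f y) ∂κ x :=
    (Measure.measurable_lintegral hf.ennreal_ofReal).comp hκ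
  have hN : Measurable fun x => ∫⁻ y, ENNReal.ofReal (-f y) ∂κ x :=
    (Measure.measurable_lintegral hf.neg.ennreal_ofReal).comp hκ
  have heq : (fun x => ∫ y, f y ∂κ x) = fun x =>
      if (∫⁻ y, (‖f y‖₊ : ℝ≥0∞) ∂κ x) < ⊤ then
        (∫⁻ y, ENNReal.ofReal (f y) ∂κ x).toReal - (∫⁻ y, ENNReal.ofReal (-f y) ∂κ x).toReal
      else 0 := by
    funext x
    split_ifs with h
    · exact integral_eq_lintegral_pos_part_sub_lintegral_neg_part ⟨hf.aestronglyMeasurable, h⟩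
    · exact integral_undef fun hi => h hi.2
  rw [heq]
  exact Measurable.ite (h1 measurableSet_Iio) (hP.ennreal_toReal.sub hN.ennreal_toReal)
    measurable_const

/-- Jensen / Cauchy-Schwarz step. -/
lemma jensen_core (κ : Measure β) [IsProbabilityMeasure κ]
    {q : β → Measure α} (hq : Measurable q) {ψ : α → ℝ} (hψ : Measurable ψ) :
    ENNReal.ofReal ((∫ z, ψ z ∂(κ.bind q)) ^ 2)
      ≤ ∫⁻ u, ENNReal.ofReal ((∫ z, ψ z ∂q u) ^ 2) ∂κ := by
  set f : β → ℝ := fun u => ∫ z, ψ z ∂q u with hf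
  have hfm : Measurable f := measurable_integral_kernel hq hψ
  rcases eq_or_ne (∫⁻ u, ENNReal.ofReal (f u ^ 2) ∂κ) ⊤ with h | h
  · rw [h]; exact le_top
  · by_cases hint : Integrable ψ (κ.bind q)
    · rw [integral_bind' hq hψ hint]
      have hint2 : Integrable (fun u => f u ^ 2) κ := by
        refine ⟨(hfm.pow_const 2).aestronglyMeasurable, ?_⟩
        show (∫⁻ u, (‖f u ^ 2‖₊ : ℝ≥0∞) ∂κ) < ⊤
        have hnn : ∀ u, ((‖f u ^ 2‖₊ : ℝ≥0∞)) = ENNReal.ofReal (f u ^ 2) := fun u => by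
          rw [← enorm_eq_nnnorm, ← ofReal_norm, Real.norm_of_nonneg (sq_nonneg _)]
        simp_rw [hnn]
        exact lt_top_iff_ne_top.mpr h
      have hL2 : MemLp f 2 κ := (memLp_two_iff_integrable_sq hfm.aestronglyMeasurable).mpr hint2
      have hvar := ProbabilityTheory.variance_nonneg f κ
      rw [ProbabilityTheory.variance_eq_sub hL2] at hvar
      simp only [Pi.pow_apply] at hvar
      have hJ : (∫ u, f u ∂κ) ^ 2 ≤ ∫ u, f u ^ 2 ∂κ := by linarith
      calc ENNReal.ofReal ((∫ u, f u ∂κ) ^ 2) ≤ ENNReal.ofReal (∫ u, f u ^ 2 ∂κ) :=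
            ENNReal.ofReal_le_ofReal hJ
        _ = ∫⁻ u, ENNReal.ofReal (f u ^ 2) ∂κ :=
            ofReal_integral_eq_lintegral_ofReal hint2
              (Filter.Eventually.of_forall fun u => sq_nonneg _)
    · rw [integral_undef hint]
      simpa using zero_le

end Aux
section Model

variable {E : Type*} [MeasurableSpace E] {n : ℕ}

lemma Qto_ge (𝓝 : FK E n) {p : ℕ} (h : n ≤ p) : 𝓝.Qto p = fun x => Measure.dirac x := by
  rw [FK.Qto, dif_pos h]

lemma Qto_lt (𝓝 : FK E n) {p : ℕ} (h : p < n) (x : E) :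
    𝓝.Qto p x = ((𝓝.G p x) • (𝓝.M (p + 1) x)).bind (𝓝.Qto (p + 1)) := by
  rw [FK.Qto, dif_neg (by omega)]

lemma gamma_zero (𝓝 : FK E n) : 𝓝.gamma 0 = 𝓝.init := rfl

lemma Qf_def (𝓝 : FK E n) (p : ℕ) (φ : E → ℝ) :
    𝓝.Qf p φ = fun x => ∫ y, φ y ∂(𝓝.Qto p x) := rfl

lemma eta_def (𝓝 : FK E n) (p : ℕ) :
    𝓝.eta p = ((𝓝.gamma p) Set.univ)⁻¹ • 𝓝.gamma p := rfl

lemma gamma_succ (𝓝 : FK E n) (p : ℕ) :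
    𝓝.gamma (p + 1) = ((𝓝.gamma p).withDensity (𝓝.G p)).bind (𝓝.M (p + 1)) := rfl

lemma measurable_Qto_aux (𝓝 : FK E n) (mM : ∀ p, 1 ≤ p → p ≤ n → Measurable (𝓝.M p))
    (mG : ∀ p, p ≤ n → Measurable (𝓝.G p)) :
    ∀ k p, n - p ≤ k → Measurable (𝓝.Qto p) := by
  intro k
  induction k with
  | zero =>
    intro p hp
    rw [Qto_ge 𝓝 (by omega)]
    exact Measure.measurable_dirac
  | succ k ih =>
    intro p hp
    by_cases h : n ≤ p
    · rw [Qto_ge 𝓝 h]; exact Measure.measurable_dirac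
    · have heq : 𝓝.Qto p = fun x => ((𝓝.G p x) • (𝓝.M (p + 1) x)).bind (𝓝.Qto (p + 1)) :=
        funext fun x => Qto_lt 𝓝 (by omega) x
      rw [heq]
      exact (Measure.measurable_bind' (ih (p + 1) (by omega))).comp
        (measurable_smul_kernel (mG p (by omega)) (mM (p + 1) (by omega) (by omega)))

lemma measurable_Qto (𝓝 : FK E n) (mM : ∀ p, 1 ≤ p → p ≤ n → Measurable (𝓝.M p))
    (mG : ∀ p, p ≤ n → Measurable (𝓝.G p)) (p : ℕ) : Measurable (𝓝.Qto p) :=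
  measurable_Qto_aux 𝓝 mM mG (n - p) p le_rfl

lemma Qto_congr_aux {𝓝₁ 𝓝₂ : FK E n} :
    ∀ k p, n - p ≤ k → (∀ q, p ≤ q → 𝓝₁.G q = 𝓝₂.G q) → (∀ q, p < q → 𝓝₁.M q = 𝓝₂.M q) →
    𝓝₁.Qto p = 𝓝₂.Qto p := by
  intro k
  induction k with
  | zero =>
    intro p hp _ _
    rw [Qto_ge 𝓝₁ (by omega), Qto_ge 𝓝₂ (by omega)]
  | succ k ih =>
    intro p hp hG hM
    by_cases h : n ≤ p
    · rw [Qto_ge 𝓝₁ h, Qto_ge 𝓝₂ h]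
    · funext x
      rw [Qto_lt 𝓝₁ (by omega) x, Qto_lt 𝓝₂ (by omega) x, hG p le_rfl, hM (p + 1) (by omega),
        ih (p + 1) (by omega) (fun q hq => hG q (by omega)) (fun q hq => hM q (by omega))]

lemma gamma_congr {𝓝₁ 𝓝₂ : FK E n} (hinit : 𝓝₁.init = 𝓝₂.init) :
    ∀ p, (∀ q, q < p → 𝓝₁.G q = 𝓝₂.G q) → (∀ q, 1 ≤ q → q ≤ p → 𝓝₁.M q = 𝓝₂.M q) →
    𝓝₁.gamma p = 𝓝₂.gamma p := by
  intro p
  induction p with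
  | zero => intro _ _; rw [gamma_zero, gamma_zero, hinit]
  | succ p ih =>
    intro hG hM
    rw [gamma_succ, gamma_succ,
      ih (fun q hq => hG q (by omega)) (fun q h1 h2 => hM q h1 (by omega)),
      hG p (by omega), hM (p + 1) (by omega) le_rfl]

lemma bind_gamma_Qto_aux (𝓝 : FK E n) (mM : ∀ p, 1 ≤ p → p ≤ n → Measurable (𝓝.M p))
    (mG : ∀ p, p ≤ n → Measurable (𝓝.G p)) :
    ∀ k p, p ≤ n → n - p ≤ k → (𝓝.gamma p).bind (𝓝.Qto p) = 𝓝.gamma n := by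
  intro k
  induction k with
  | zero =>
    intro p hpn hp
    have hpe : p = n := by omega
    subst hpe
    rw [Qto_ge 𝓝 le_rfl]
    exact Measure.bind_dirac
  | succ k ih =>
    intro p hpn hp
    by_cases h : n ≤ p
    · have hpe : p = n := by omega
      subst hpe
      rw [Qto_ge 𝓝 le_rfl]
      exact Measure.bind_dirac
    · have hsm : Measurable (fun x => 𝓝.G p x • 𝓝.M (p + 1) x) :=
        measurable_smul_kernel (mG p (by omega)) (mM (p + 1) (by omega) (by omega))
      have hq1 : Measurable (𝓝.Qto (p + 1)) := measurable_Qto 𝓝 mM mG (p + 1)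
      have h1 : (𝓝.gamma p).bind (𝓝.Qto p)
          = ((𝓝.gamma p).bind (fun x => 𝓝.G p x • 𝓝.M (p + 1) x)).bind (𝓝.Qto (p + 1)) := by
        rw [Measure.bind_bind hsm.aemeasurable hq1.aemeasurable]
        exact congrArg (Measure.bind _) (funext fun x => Qto_lt 𝓝 (by omega) x)
      have h2 : (𝓝.gamma p).bind (fun x => 𝓝.G p x • 𝓝.M (p + 1) x) = 𝓝.gamma (p + 1) := by
        rw [gamma_succ, withDensity_bind (mG p (by omega)) (mM (p + 1) (by omega) (by omega))]
      rw [h1, h2]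
      exact ih (p + 1) (by omega) (by omega)

lemma bind_gamma_Qto (𝓝 : FK E n) (mM : ∀ p, 1 ≤ p → p ≤ n → Measurable (𝓝.M p))
    (mG : ∀ p, p ≤ n → Measurable (𝓝.G p)) {p : ℕ} (hpn : p ≤ n) :
    (𝓝.gamma p).bind (𝓝.Qto p) = 𝓝.gamma n :=
  bind_gamma_Qto_aux 𝓝 mM mG (n - p) p hpn le_rfl

lemma Qf_congr_ae (𝓝 : FK E n) (p : ℕ) (hQm : Measurable (𝓝.Qto p)) {φ ψ : E → ℝ} {N : Set E}
    (hNm : MeasurableSet N) (hagree : ∀ y, y ∉ N → φ y = ψ y)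
    (hnull : ((𝓝.gamma p).bind (𝓝.Qto p)) N = 0) :
    𝓝.Qf p φ =ᵐ[𝓝.gamma p] 𝓝.Qf p ψ := by
  rw [Measure.bind_apply hNm hQm.aemeasurable] at hnull
  have h0 := (lintegral_eq_zero_iff ((Measure.measurable_coe hNm).comp hQm)).mp hnull
  filter_upwards [h0] with x hx
  have hx' : (𝓝.Qto p x) N = 0 := hx
  have hae : ∀ᵐ y ∂(𝓝.Qto p x), φ y = ψ y := by
    rw [Filter.eventually_iff, mem_ae_iff]
    refine measure_mono_null ?_ hx'
    intro y hy
    by_contra hyN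
    exact hy (hagree y hyN)
  exact integral_congr_ae hae

end Model
section Master

variable {E : Type*} [MeasurableSpace E] {n : ℕ}

theorem knot_master (𝓜 𝓜' : FK E n) (h𝓜 : 𝓜.Reg) (t : ℕ) (ht : t < n)
    (K : E → Measure E) (hK : IsKernel K)
    (hG : ∀ p, p ≠ t → 𝓜'.G p = 𝓜.G p)
    (hGt : 𝓜'.G t = kap K (𝓜.G t))
    (hM : ∀ p, p ≠ t → p ≠ t + 1 → 𝓜'.M p = 𝓜.M p)
    (hMt1 : 𝓜'.M (t + 1) = kcomp (twist K (𝓜.G t)) (𝓜.M (t + 1)))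
    (hMt : 1 ≤ t → Measurable (𝓜'.M t))
    (hMtK : 1 ≤ t → ∀ x, (𝓜'.M t x).bind K = 𝓜.M t x)
    (hMtae : 1 ≤ t → ∀ x, ∀ᵐ y ∂(𝓜'.M t x), kap K (𝓜.G t) y ≠ ⊤)
    (hγlt : ∀ p, p < t → 𝓜'.gamma p = 𝓜.gamma p)
    (hγt : (𝓜'.gamma t).bind K = 𝓜.gamma t)
    (hγae : ∀ᵐ y ∂(𝓜'.gamma t), kap K (𝓜.G t) y ≠ ⊤) :
    ∀ φ : E → ℝ, 𝓜.memF φ →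
      (∫ x, φ x ∂(𝓜'.gamma n) = ∫ x, φ x ∂(𝓜.gamma n)) ∧ 𝓜'.var φ ≤ 𝓜.var φ := by
  -- basic measurability facts
  have mG : ∀ p, p ≤ n → Measurable (𝓜.G p) := h𝓜.2.2.1
  have mM : ∀ p, 1 ≤ p → p ≤ n → Measurable (𝓜.M p) := fun p h1 h2 => (h𝓜.2.1 p h1 h2).1
  have mGt : Measurable (𝓜.G t) := mG t ht.le
  have mtw : Measurable (twist K (𝓜.G t)) := measurable_twist hK.1 mGt
  have mkap : Measurable (kap K (𝓜.G t)) := measurable_kap hK.1 mGt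
  have mG' : ∀ p, p ≤ n → Measurable (𝓜'.G p) := by
    intro p hp
    by_cases hpt : p = t
    · subst hpt; rw [hGt]; exact mkap
    · rw [hG p hpt]; exact mG p hp
  have mM' : ∀ p, 1 ≤ p → p ≤ n → Measurable (𝓜'.M p) := by
    intro p h1 h2
    by_cases hpt : p = t
    · subst hpt; exact hMt h1
    · by_cases hpt1 : p = t + 1
      · subst hpt1
        rw [hMt1]
        exact (Measure.measurable_bind' (mM (t + 1) (by omega) h2)).comp mtw
      · rw [hM p hpt hpt1]; exact mM p h1 h2
  have mQto : ∀ p, Measurable (𝓜.Qto p) := measurable_Qto 𝓜 mM mG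
  have mQto' : ∀ p, Measurable (𝓜'.Qto p) := measurable_Qto 𝓜' mM' mG'
  -- Q_{p,n} agree above t
  have hQge : ∀ p, t + 1 ≤ p → 𝓜'.Qto p = 𝓜.Qto p := fun p hp =>
    Qto_congr_aux (n - p) p le_rfl (fun q hq => hG q (by omega)) (fun q hq => hM q (by omega) (by omega))
  -- gammas agree above t
  have hγgt : ∀ p, t + 1 ≤ p → 𝓜'.gamma p = 𝓜.gamma p := by
    have base : 𝓜'.gamma (t + 1) = 𝓜.gamma (t + 1) := by
      have mM1 : Measurable (𝓜.M (t + 1)) := mM (t + 1) (by omega) (by omega)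
      have mMQ : Measurable (fun u => 𝓜.M (t + 1) u) := mM1
      calc 𝓜'.gamma (t + 1)
          = ((𝓜'.gamma t).withDensity (kap K (𝓜.G t))).bind
              (fun x => (twist K (𝓜.G t) x).bind (𝓜.M (t + 1))) := by
            rw [gamma_succ, hGt, hMt1]; rfl
        _ = (((𝓜'.gamma t).withDensity (kap K (𝓜.G t))).bind (twist K (𝓜.G t))).bind
              (𝓜.M (t + 1)) := (Measure.bind_bind mtw.aemeasurable mM1.aemeasurable).symm
        _ = ((𝓜'.gamma t).bind (fun y => kap K (𝓜.G t) y • twist K (𝓜.G t) y)).bind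
              (𝓜.M (t + 1)) := by rw [withDensity_bind mkap mtw]
        _ = ((𝓜'.gamma t).bind (fun y => (K y).withDensity (𝓜.G t))).bind (𝓜.M (t + 1)) := by
            rw [bind_congr_ae (measurable_smul_kernel mkap mtw)
              (measurable_withDensity_kernel hK.1 mGt)
              (hγae.mono fun y hy => kap_smul_twist (𝓜.G t) y hy)]
        _ = (((𝓜'.gamma t).bind K).withDensity (𝓜.G t)).bind (𝓜.M (t + 1)) := by
            rw [bind_withDensity hK.1 mGt]
        _ = 𝓜.gamma (t + 1) := by rw [hγt, gamma_succ]
    intro p hp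
    induction p with
    | zero => omega
    | succ p ih =>
      by_cases hpe : p + 1 = t + 1
      · rw [hpe] at *; exact base
      · have hp' : t + 1 ≤ p := by omega
        rw [gamma_succ, gamma_succ, ih hp', hG p (by omega), hM (p + 1) (by omega) (by omega)]
  have hγn : 𝓜'.gamma n = 𝓜.gamma n := hγgt n (by omega)
  -- the key pointwise identity at time t
  have hQt_good : ∀ y, kap K (𝓜.G t) y ≠ ⊤ → 𝓜'.Qto t y = (K y).bind (𝓜.Qto t) := by
    intro y hy
    have hQt1 : 𝓜'.Qto (t + 1) = 𝓜.Qto (t + 1) := hQge (t + 1) le_rfl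
    have mQ1 : Measurable (𝓜.Qto (t + 1)) := mQto (t + 1)
    have mM1 : Measurable (𝓜.M (t + 1)) := mM (t + 1) (by omega) (by omega)
    have mMQ : Measurable (fun u => (𝓜.M (t + 1) u).bind (𝓜.Qto (t + 1))) :=
      (Measure.measurable_bind' mQ1).comp mM1
    rw [Qto_lt 𝓜' ht y, hGt, hMt1, hQt1]
    calc (kap K (𝓜.G t) y • kcomp (twist K (𝓜.G t)) (𝓜.M (t + 1)) y).bind (𝓜.Qto (t + 1))
        = kap K (𝓜.G t) y • ((twist K (𝓜.G t) y).bind (𝓜.M (t + 1))).bind (𝓜.Qto (t + 1)) :=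
          smul_bind' _ _ mQ1
      _ = kap K (𝓜.G t) y •
            (twist K (𝓜.G t) y).bind (fun u => (𝓜.M (t + 1) u).bind (𝓜.Qto (t + 1))) := by
          rw [Measure.bind_bind mM1.aemeasurable mQ1.aemeasurable]
      _ = (kap K (𝓜.G t) y • twist K (𝓜.G t) y).bind
            (fun u => (𝓜.M (t + 1) u).bind (𝓜.Qto (t + 1))) := (smul_bind' _ _ mMQ).symm
      _ = ((K y).withDensity (𝓜.G t)).bind
            (fun u => (𝓜.M (t + 1) u).bind (𝓜.Qto (t + 1))) := by
          rw [kap_smul_twist (𝓜.G t) y hy]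
      _ = (K y).bind (fun u => 𝓜.G t u • (𝓜.M (t + 1) u).bind (𝓜.Qto (t + 1))) :=
          withDensity_bind mGt mMQ
      _ = (K y).bind (𝓜.Qto t) := by
          refine congrArg (Measure.bind _) (funext fun u => ?_)
          rw [Qto_lt 𝓜 ht u, smul_bind' _ _ mQ1]
  -- Q_{p,n} agree below t
  have hQlt_aux : ∀ k p, p < t → t - p ≤ k → 𝓜'.Qto p = 𝓜.Qto p := by
    intro k
    induction k with
    | zero => intro p hp hk; omega
    | succ k ih =>
      intro p hp hk
      funext x
      rw [Qto_lt 𝓜' (by omega) x, Qto_lt 𝓜 (by omega) x, hG p (by omega)]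
      by_cases hp1 : p + 1 = t
      · rw [hp1, smul_bind' _ _ (mQto' t), smul_bind' _ _ (mQto t)]
        congr 1
        have h1t : 1 ≤ t := by omega
        calc (𝓜'.M t x).bind (𝓜'.Qto t)
            = (𝓜'.M t x).bind (fun y => (K y).bind (𝓜.Qto t)) :=
              bind_congr_ae (mQto' t) ((Measure.measurable_bind' (mQto t)).comp hK.1)
                ((hMtae h1t x).mono fun y hy => hQt_good y hy)
          _ = ((𝓜'.M t x).bind K).bind (𝓜.Qto t) := (Measure.bind_bind hK.1.aemeasurable (mQto t).aemeasurable).symm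
          _ = (𝓜.M t x).bind (𝓜.Qto t) := by rw [hMtK h1t x]
      · rw [hM (p + 1) (by omega) (by omega), ih (p + 1) (by omega) (by omega)]
  have hQlt : ∀ p, p < t → 𝓜'.Qto p = 𝓜.Qto p := fun p hp => hQlt_aux (t - p) p hp le_rfl
  -- equal total masses at time t
  have hmass : 𝓜'.gamma t Set.univ = 𝓜.gamma t Set.univ := by
    rw [← hγt, Measure.bind_apply MeasurableSet.univ hK.1.aemeasurable]
    have : ∀ y, (K y) Set.univ = 1 := fun y => (hK.2 y).measure_univ
    simp [this]
  intro φ hφ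
  refine ⟨by rw [hγn], ?_⟩
  rw [FK.var, FK.var]
  by_cases htop : 𝓜.gamma n Set.univ = ⊤
  · have hz : ∀ p ∈ Finset.range (n + 1), 𝓜'.v p φ = 0 := by
      intro p _
      rw [FK.v, hγn, htop]
      simp [pow_two, ENNReal.div_top, zero_tsub]
    rw [Finset.sum_eq_zero hz]
    exact zero_le
  · -- replace φ by a measurable representative
    obtain ⟨ψ, hψm, hψae⟩ : ∃ ψ : E → ℝ, Measurable ψ ∧ φ =ᵐ[𝓜.gamma n] ψ := by
      by_cases h0 : 𝓜.gamma n Set.univ = 0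
      · refine ⟨0, measurable_const, ?_⟩
        rw [Measure.measure_univ_eq_zero.mp h0]
        have hb : ae (0 : Measure E) = ⊥ := ae_zero
        rw [Filter.EventuallyEq, hb]
        exact Filter.eventually_bot
      · have hsm := hφ.1.aestronglyMeasurable
        refine ⟨hsm.mk φ, hsm.stronglyMeasurable_mk.measurable, ?_⟩
        have h1 : ∀ᵐ x ∂(((𝓜.gamma n) Set.univ)⁻¹ • 𝓜.gamma n), φ x = hsm.mk φ x := hsm.ae_eq_mk
        have h2 := ae_iff.mp h1
        rw [Measure.smul_apply, smul_eq_mul, mul_eq_zero,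
          or_iff_right (ENNReal.inv_ne_zero.mpr htop)] at h2
        exact ae_iff.mpr h2
    obtain ⟨N, hNsub, hNm, hN0⟩ :=
      exists_measurable_superset_of_null (ae_iff.mp hψae)
    have hagree : ∀ y, y ∉ N → φ y = ψ y := by
      intro y hy
      by_contra hne
      exact hy (hNsub hne)
    have hN0' : 𝓜'.gamma n N = 0 := by rw [hγn]; exact hN0
    refine Finset.sum_le_sum fun p hp => ?_
    have hpn : p ≤ n := by simp at hp; omega
    by_cases hpt : p = t
    · rw [hpt]
      -- the genuinely different term: variance reduction at time t
      have hQfφψ : 𝓜.Qf t φ =ᵐ[𝓜.gamma t] 𝓜.Qf t ψ :=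
        Qf_congr_ae 𝓜 t (mQto t) hNm hagree (by rw [bind_gamma_Qto 𝓜 mM mG ht.le]; exact hN0)
      have hQfφψ' : 𝓜'.Qf t φ =ᵐ[𝓜'.gamma t] 𝓜'.Qf t ψ :=
        Qf_congr_ae 𝓜' t (mQto' t) hNm hagree
          (by rw [bind_gamma_Qto 𝓜' mM' mG' ht.le]; exact hN0')
      have hmain : (∫⁻ x, ENNReal.ofReal ((𝓜'.Qf t φ x) ^ 2) ∂(𝓜'.gamma t))
          ≤ ∫⁻ x, ENNReal.ofReal ((𝓜.Qf t φ x) ^ 2) ∂(𝓜.gamma t) := by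
        have mQfψ : Measurable (𝓜.Qf t ψ) := measurable_integral_kernel (mQto t) hψm
        have mF : Measurable (fun u => ENNReal.ofReal ((𝓜.Qf t ψ u) ^ 2)) :=
          (mQfψ.pow_const 2).ennreal_ofReal
        calc ∫⁻ x, ENNReal.ofReal ((𝓜'.Qf t φ x) ^ 2) ∂(𝓜'.gamma t)
            = ∫⁻ x, ENNReal.ofReal ((𝓜'.Qf t ψ x) ^ 2) ∂(𝓜'.gamma t) :=
              lintegral_congr_ae (hQfφψ'.mono fun x hx => by simp only [hx])
          _ ≤ ∫⁻ y, (∫⁻ u, ENNReal.ofReal ((𝓜.Qf t ψ u) ^ 2) ∂(K y)) ∂(𝓜'.gamma t) := by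
              refine lintegral_mono_ae (hγae.mono fun y hy => ?_)
              have hQ : 𝓜'.Qto t y = (K y).bind (𝓜.Qto t) := hQt_good y hy
              show ENNReal.ofReal ((∫ z, ψ z ∂(𝓜'.Qto t y)) ^ 2) ≤ _
              rw [hQ]
              haveI : IsProbabilityMeasure (K y) := hK.2 y
              exact jensen_core (K y) (mQto t) hψm
          _ = ∫⁻ u, ENNReal.ofReal ((𝓜.Qf t ψ u) ^ 2) ∂((𝓜'.gamma t).bind K) :=
              (Measure.lintegral_bind hK.1.aemeasurable mF.aemeasurable).symm
          _ = ∫⁻ u, ENNReal.ofReal ((𝓜.Qf t ψ u) ^ 2) ∂(𝓜.gamma t) := by rw [hγt]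
          _ = ∫⁻ x, ENNReal.ofReal ((𝓜.Qf t φ x) ^ 2) ∂(𝓜.gamma t) :=
              lintegral_congr_ae (hQfφψ.mono fun x hx => by simp only [hx]) |>.symm
      rw [FK.v, FK.v, eta_def, eta_def, hγn, hmass]
      exact tsub_le_tsub_right
        (ENNReal.div_le_div_right (mul_le_mul_right hmain _) _) _
    · -- all other terms are equal
      have hgp : 𝓜'.gamma p = 𝓜.gamma p := by
        rcases lt_or_ge p t with h | h
        · exact hγlt p h
        · exact hγgt p (by omega)
      have hqp : 𝓜'.Qto p = 𝓜.Qto p := by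
        rcases lt_or_ge p t with h | h
        · exact hQlt p h
        · exact hQge p (by omega)
      have : 𝓜'.v p φ = 𝓜.v p φ := by
        rw [FK.v, FK.v, eta_def, eta_def, hγn, hgp]
        rw [show 𝓜'.Qf p φ = 𝓜.Qf p φ by rw [Qf_def, Qf_def, hqp]]
      exact this.le

end Master

/-- Theorem 3.1, variance reduction from a single knot: if
`K = (t,R,K)` is a knot compatible with `M` (`t < n`) and `M* = K ∗ M`, then for every
`φ ∈ F(M)` the terminal predictive measures agree, `γ_n(φ) = γ*_n(φ)`, and the
asymptotic variances satisfy `σ²_*(φ) ≤ σ²(φ)`.  (The case `t = 0`, where `R` is a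
probability measure, and the case `1 ≤ t < n` are stated separately.) -/
theorem statement3 {E : Type*} [MeasurableSpace E] {n : ℕ}
    (𝓜 : FK E n) (h𝓜 : 𝓜.Reg) :
    (∀ (R0 : Measure E) (K : E → Measure E), 0 < n →
      IsProbabilityMeasure R0 → IsKernel K → R0.bind K = 𝓜.init →
      ∀ φ : E → ℝ, 𝓜.memF φ →
        (∫ x, φ x ∂((knotApply0 R0 K 𝓜).gamma n) = ∫ x, φ x ∂(𝓜.gamma n)) ∧
        (knotApply0 R0 K 𝓜).var φ ≤ 𝓜.var φ) ∧
    (∀ (t : ℕ) (R K : E → Measure E), 1 ≤ t → t < n →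
      IsKernel R → IsKernel K → kcomp R K = 𝓜.M t →
      ∀ φ : E → ℝ, 𝓜.memF φ →
        (∫ x, φ x ∂((knotApply t R K 𝓜).gamma n) = ∫ x, φ x ∂(𝓜.gamma n)) ∧
        (knotApply t R K 𝓜).var φ ≤ 𝓜.var φ) := by
  have mG : ∀ p, p ≤ n → Measurable (𝓜.G p) := h𝓜.2.2.1
  constructor
  · intro R0 K hn hR0 hK hbind φ hφ
    have mG0 : Measurable (𝓜.G 0) := mG 0 (by omega)
    have hγ0 : ((knotApply0 R0 K 𝓜).gamma 0).bind K = 𝓜.gamma 0 := by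
      rw [gamma_zero, gamma_zero]
      exact hbind
    have hγae : ∀ᵐ y ∂((knotApply0 R0 K 𝓜).gamma 0), kap K (𝓜.G 0) y ≠ ⊤ := by
      have hfin : ∫⁻ y, kap K (𝓜.G 0) y ∂(R0) ≠ ⊤ := by
        rw [show ∫⁻ y, kap K (𝓜.G 0) y ∂(R0) = ∫⁻ x, 𝓜.G 0 x ∂(R0.bind K) from
          (Measure.lintegral_bind hK.1.aemeasurable mG0.aemeasurable).symm, hbind]
        exact h𝓜.2.2.2.2.1
      exact (ae_lt_top (measurable_kap hK.1 mG0) hfin).mono fun y hy => hy.ne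
    refine knot_master 𝓜 (knotApply0 R0 K 𝓜) h𝓜 0 hn K hK ?_ ?_ ?_ ?_ ?_ ?_ ?_ ?_ hγ0 hγae φ hφ
    · intro p hp; simp [knotApply0, hp]
    · simp [knotApply0]
    · intro p hp0 hp1; simp only [knotApply0]; rw [if_neg (by omega)]
    · simp [knotApply0]
    · intro h; omega
    · intro h; omega
    · intro h; omega
    · intro p hp; omega
  · intro t R K ht1 htn hR hK hcomp φ hφ
    set 𝓜' := knotApply t R K 𝓜 with h𝓜'
    have mGt : Measurable (𝓜.G t) := mG t htn.le
    have hRK : ∀ x, (R x).bind K = 𝓜.M t x := fun x => congrFun hcomp x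
    have hγlt : ∀ p, p < t → 𝓜'.gamma p = 𝓜.gamma p := by
      intro p hp
      refine gamma_congr (𝓝₁ := 𝓜') (𝓝₂ := 𝓜) rfl p (fun q hq => ?_) (fun q h1 h2 => ?_)
      · show (if q = t then _ else _) = _
        rw [if_neg (by omega)]
      · show (if q = t then _ else if q = t + 1 then _ else _) = _
        rw [if_neg (by omega), if_neg (by omega)]
    have hγform : 𝓜'.gamma t = ((𝓜.gamma (t - 1)).withDensity (𝓜.G (t - 1))).bind R := by
      obtain ⟨s, rfl⟩ : ∃ s, t = s + 1 := ⟨t - 1, by omega⟩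
      rw [gamma_succ, hγlt s (by omega)]
      have h1 : 𝓜'.G s = 𝓜.G s := by
        show (if s = s + 1 then _ else _) = _
        rw [if_neg (by omega)]
      have h2 : 𝓜'.M (s + 1) = R := by
        show (if s + 1 = s + 1 then _ else _) = _
        rw [if_pos rfl]
      rw [h1, h2]
      simp
    have hRae : ∀ x, ∀ᵐ y ∂(R x), kap K (𝓜.G t) y ≠ ⊤ := by
      intro x
      have hfin : ∫⁻ y, kap K (𝓜.G t) y ∂(R x) ≠ ⊤ := by
        rw [show ∫⁻ y, kap K (𝓜.G t) y ∂(R x) = ∫⁻ z, 𝓜.G t z ∂((R x).bind K) from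
          (Measure.lintegral_bind hK.1.aemeasurable mGt.aemeasurable).symm, hRK x]
        exact h𝓜.2.2.2.2.2 t x ht1 htn.le
      exact (ae_lt_top (measurable_kap hK.1 mGt) hfin).mono fun y hy => hy.ne
    have hγt : (𝓜'.gamma t).bind K = 𝓜.gamma t := by
      obtain ⟨s, rfl⟩ : ∃ s, t = s + 1 := ⟨t - 1, by omega⟩
      rw [hγform]
      simp only [Nat.add_sub_cancel]
      rw [Measure.bind_bind hR.1.aemeasurable hK.1.aemeasurable]
      rw [show (fun a => (R a).bind K) = 𝓜.M (s + 1) from funext hRK]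
      rw [gamma_succ]
    have hγae : ∀ᵐ y ∂(𝓜'.gamma t), kap K (𝓜.G t) y ≠ ⊤ := by
      have hS : MeasurableSet {y | kap K (𝓜.G t) y = ⊤} :=
        measurable_kap hK.1 mGt (measurableSet_singleton ⊤)
      have hz : (𝓜'.gamma t) {y | kap K (𝓜.G t) y = ⊤} = 0 := by
        rw [hγform, Measure.bind_apply hS hR.1.aemeasurable]
        have hzero : ∀ x, (R x) {y | kap K (𝓜.G t) y = ⊤} = 0 := by
          intro x
          have := hRae x
          rw [ae_iff] at this
          simpa [not_not] using this
        simp [hzero]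
      rw [ae_iff]
      simpa [not_not] using hz
    refine knot_master 𝓜 𝓜' h𝓜 t htn K hK ?_ ?_ ?_ ?_ ?_ ?_ ?_ hγlt hγt hγae φ hφ
    · intro p hp
      show (if p = t then _ else _) = _
      rw [if_neg hp]
    · show (if t = t then _ else _) = _
      rw [if_pos rfl]
    · intro p hp0 hp1
      show (if p = t then _ else if p = t + 1 then _ else _) = _
      rw [if_neg hp0, if_neg hp1]
    · show (if t + 1 = t then _ else if t + 1 = t + 1 then _ else _) = _
      rw [if_neg (by omega), if_pos rfl]
    · intro _
      show Measurable (if t = t then R else _)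
      rw [if_pos rfl]
      exact hR.1
    · intro _ x
      show ((if t = t then R else _) x).bind K = _
      rw [if_pos rfl]
      exact hRK x
    · intro _ x
      show ∀ᵐ y ∂((if t = t then R else _) x), _
      rw [if_pos rfl]
      exact hRae x

end KnotsPaper
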